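/- arXiv:2601.08727 — 3 statements merged into one kernel-verified Lean document; each statement's English description precedes it below -/
import Mathlib

section
/- Let n ≥ 1 and let p be a real polynomial in 2n variables X_1,…,X_n,Y_1,…,Y_n such that p(x,y) = 0 for all (x,y) ∈ {0,1}^n × {0,1}^n with x = 0^n, and p(x,y) = 1 for all (x,y) ∈ {0,1}^n × {0,1}^n with |x| ≥ 1 and |x| + |y| = n+1. Then deg(p) ≥ n. -/
open MvPolynomial

/-- A real multivariate polynomial is multilinear if every variable occurs with degree ≤ 1. -/
def Multilinear {σ : Type*} (p : MvPolynomial σ ℝ) : Prop :=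
  ∀ i, MvPolynomial.degreeOf i p ≤ 1

/-- Evaluation of a polynomial at a Boolean point (true ↦ 1, false ↦ 0). -/
noncomputable def evalB {σ : Type*} (x : σ → Bool) (p : MvPolynomial σ ℝ) : ℝ :=
  MvPolynomial.eval (fun i => if x i then (1:ℝ) else 0) p

/-- The real value of a Boolean (true ↦ 1, false ↦ 0). -/
def bval (b : Bool) : ℝ := if b then 1 else 0

/-- The Hamming weight of a Boolean string. -/
def wt {n : ℕ} (x : Fin n → Bool) : ℕ := (Finset.univ.filter fun i => x i = true).card

open Finset

def AuL {n : ℕ} (u : (Fin n ⊕ Fin n) →₀ ℕ) : Finset (Fin n) :=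
  Finset.univ.filter fun i => u (Sum.inl i) ≠ 0
def AuR {n : ℕ} (u : (Fin n ⊕ Fin n) →₀ ℕ) : Finset (Fin n) :=
  Finset.univ.filter fun i => u (Sum.inr i) ≠ 0

lemma count_finset (n s : ℕ) (A : Finset (Fin n)) (h : A.card ≤ s) :
    (univ.filter fun S : Finset (Fin n) => S.card = s ∧ A ⊆ S).card
      = (n - A.card).choose (s - A.card) := by
  have hAc : #Aᶜ = n - #A := by rw [Finset.card_compl, Fintype.card_fin]
  rw [← hAc, ← Finset.card_powersetCard (s - A.card) Aᶜ]
  apply Finset.card_bij (fun S _ => S \ A)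
  · intro S hS
    simp only [mem_filter, mem_univ, true_and] at hS
    rw [Finset.mem_powersetCard]
    exact ⟨fun i hi => by simp only [Finset.mem_compl]; exact (Finset.mem_sdiff.mp hi).2,
      by rw [Finset.card_sdiff_of_subset hS.2, hS.1]⟩
  · intro S1 h1 S2 h2 hEq
    simp only [mem_filter, mem_univ, true_and] at h1 h2
    have := congrArg (· ∪ A) hEq
    simpa [Finset.sdiff_union_of_subset h1.2, Finset.sdiff_union_of_subset h2.2] using this
  · intro T hT
    rw [Finset.mem_powersetCard] at hT
    have hdisj : Disjoint T A := by
      refine Finset.disjoint_left.mpr fun i hi hiA => ?_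
      have := hT.1 hi
      simp only [Finset.mem_compl] at this
      exact this hiA
    refine ⟨T ∪ A, ?_, ?_⟩
    · simp only [mem_filter, mem_univ, true_and]
      constructor
      · rw [Finset.card_union_of_disjoint hdisj, hT.2]
        omega
      · exact Finset.subset_union_right
    · rw [Finset.union_sdiff_distrib, Finset.sdiff_self, Finset.union_empty,
        Finset.sdiff_eq_self_of_disjoint hdisj]

lemma count_bool (n s : ℕ) (A : Finset (Fin n)) :
    (univ.filter fun x : Fin n → Bool => wt x = s ∧ ∀ i ∈ A, x i = true).card
      = (univ.filter fun S : Finset (Fin n) => S.card = s ∧ A ⊆ S).card := by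
  apply Finset.card_bij (fun x _ => univ.filter fun i => x i = true)
  · intro x hx
    simp only [mem_filter, mem_univ, true_and] at hx ⊢
    exact ⟨hx.1, fun i hi => by simp [hx.2 i hi]⟩
  · intro x1 h1 x2 h2 hEq
    funext i
    have : (i ∈ univ.filter fun j => x1 j = true) ↔ (i ∈ univ.filter fun j => x2 j = true) := by
      rw [hEq]
    simp only [mem_filter, mem_univ, true_and] at this
    cases hx1 : x1 i <;> cases hx2 : x2 i <;> simp_all
  · intro S hS
    simp only [mem_filter, mem_univ, true_and] at hS
    refine ⟨fun i => decide (i ∈ S), ?_, ?_⟩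
    · simp only [mem_filter, mem_univ, true_and]
      constructor
      · unfold wt
        rw [← hS.1]
        congr 1
        ext i
        simp
      · intro i hi
        simp [hS.2 hi]
    · ext i
      simp

lemma cnt_mul_dsc (n s : ℕ) (A : Finset (Fin n)) :
    (univ.filter fun x : Fin n → Bool => wt x = s ∧ ∀ i ∈ A, x i = true).card
        * n.descFactorial A.card
      = n.choose s * s.descFactorial A.card := by
  rcases lt_or_ge s A.card with hlt | hge
  · rw [Nat.descFactorial_eq_zero_iff_lt.mpr hlt, Nat.mul_zero]
    convert Nat.zero_mul _
    rw [Finset.card_eq_zero, Finset.filter_eq_empty_iff]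
    intro x _
    rintro ⟨hwt, hsub⟩
    have : A ⊆ univ.filter fun i => x i = true := fun i hi => by simp [hsub i hi]
    have := Finset.card_le_card this
    unfold wt at hwt
    omega
  rcases le_or_gt s n with hsn | hns
  · rw [count_bool, count_finset n s A hge]
    have hAn : A.card ≤ n := le_trans hge hsn
    rw [Nat.descFactorial_eq_factorial_mul_choose n, Nat.descFactorial_eq_factorial_mul_choose s]
    have key : n.choose s * s.choose A.card = n.choose A.card * (n - A.card).choose (s - A.card) :=
      Nat.choose_mul hge
    calc (n - A.card).choose (s - A.card) * ((Nat.factorial A.card) * n.choose A.card)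
        = (Nat.factorial A.card) * (n.choose A.card * (n - A.card).choose (s - A.card)) := by ring
      _ = (Nat.factorial A.card) * (n.choose s * s.choose A.card) := by rw [key]
      _ = n.choose s * ((Nat.factorial A.card) * s.choose A.card) := by ring
  · rw [Nat.choose_eq_zero_of_lt hns, Nat.zero_mul]
    convert Nat.zero_mul _
    rw [Finset.card_eq_zero, Finset.filter_eq_empty_iff]
    intro x _
    rintro ⟨hwt, -⟩
    have : wt x ≤ n := by
      unfold wt
      calc (univ.filter fun i => x i = true).card ≤ (univ : Finset (Fin n)).card :=
        Finset.card_filter_le _ _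
      _ = n := by simp
    omega

lemma mono_eval {n : ℕ} (u : (Fin n ⊕ Fin n) →₀ ℕ) (x y : Fin n → Bool) :
    (∏ i ∈ u.support, (fun i => if Sum.elim x y i then (1:ℝ) else 0) i ^ u i)
      = (if ∀ i ∈ AuL u, x i = true then (1:ℝ) else 0)
        * (if ∀ j ∈ AuR u, y j = true then (1:ℝ) else 0) := by
  have step : ∀ i ∈ u.support,
      ((fun i => if Sum.elim x y i then (1:ℝ) else 0) i) ^ u i
        = if Sum.elim x y i then (1:ℝ) else 0 := by
    intro i hi
    have hne : u i ≠ 0 := Finsupp.mem_support_iff.mp hi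
    by_cases h : Sum.elim x y i = true
    · simp [h]
    · simp only [if_neg h]
      exact zero_pow hne
  rw [Finset.prod_congr rfl step, Finset.prod_boole]
  have : (∀ i ∈ u.support, Sum.elim x y i = true)
      ↔ ((∀ i ∈ AuL u, x i = true) ∧ (∀ j ∈ AuR u, y j = true)) := by
    constructor
    · intro h
      constructor
      · intro i hi
        have : Sum.inl i ∈ u.support := by
          rw [Finsupp.mem_support_iff]
          simpa [AuL] using hi
        exact h _ this
      · intro j hj
        have : Sum.inr j ∈ u.support := by
          rw [Finsupp.mem_support_iff]
          simpa [AuR] using hj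
        exact h _ this
    · rintro ⟨hx, hy⟩ i hi
      have hne : u i ≠ 0 := Finsupp.mem_support_iff.mp hi
      cases i with
      | inl a => exact hx a (by simp [AuL, hne])
      | inr b => exact hy b (by simp [AuR, hne])
  simp only [this]
  by_cases hP : ∀ i ∈ AuL u, x i = true
  · by_cases hQ : ∀ j ∈ AuR u, y j = true
    · rw [if_pos ⟨hP, hQ⟩, if_pos hP, if_pos hQ]; norm_num
    · rw [if_neg (fun h => hQ h.2), if_neg hQ]; norm_num
  · rw [if_neg (fun h => hP h.1), if_neg hP]; norm_num

lemma slice_sum_mono {n : ℕ} (u : (Fin n ⊕ Fin n) →₀ ℕ) (s t : ℕ) :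
    (∑ x ∈ univ.filter (fun x : Fin n → Bool => wt x = s),
      ∑ y ∈ univ.filter (fun y : Fin n → Bool => wt y = t),
        evalB (Sum.elim x y) (monomial u (1:ℝ)))
    = ((univ.filter fun x : Fin n → Bool => wt x = s ∧ ∀ i ∈ AuL u, x i = true).card : ℝ)
      * ((univ.filter fun y : Fin n → Bool => wt y = t ∧ ∀ j ∈ AuR u, y j = true).card : ℝ) := by
  have heval : ∀ x y : Fin n → Bool, evalB (Sum.elim x y) (monomial u (1:ℝ))
      = (if ∀ i ∈ AuL u, x i = true then (1:ℝ) else 0)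
        * (if ∀ j ∈ AuR u, y j = true then (1:ℝ) else 0) := by
    intro x y
    rw [evalB, eval_monomial, one_mul, Finsupp.prod]
    exact mono_eval u x y
  calc (∑ x ∈ univ.filter (fun x : Fin n → Bool => wt x = s),
      ∑ y ∈ univ.filter (fun y : Fin n → Bool => wt y = t),
        evalB (Sum.elim x y) (monomial u (1:ℝ)))
      = (∑ x ∈ univ.filter (fun x : Fin n → Bool => wt x = s),
          (if ∀ i ∈ AuL u, x i = true then (1:ℝ) else 0))
        * (∑ y ∈ univ.filter (fun y : Fin n → Bool => wt y = t),
          (if ∀ j ∈ AuR u, y j = true then (1:ℝ) else 0)) := by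
        rw [Finset.sum_mul_sum]
        exact Finset.sum_congr rfl fun x _ => Finset.sum_congr rfl fun y _ => heval x y
    _ = _ := by
        rw [Finset.sum_boole, Finset.sum_boole, Finset.filter_filter, Finset.filter_filter]

lemma slice_card (n s : ℕ) :
    (univ.filter fun x : Fin n → Bool => wt x = s).card = n.choose s := by
  have heq : (univ.filter fun x : Fin n → Bool => wt x = s)
      = (univ.filter fun x : Fin n → Bool => wt x = s ∧ ∀ i ∈ (∅ : Finset (Fin n)), x i = true) := by
    apply Finset.filter_congr
    intro x _
    simp

  rw [heq, count_bool, count_finset n s ∅ (by simp)]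
  simp

/-- If a real polynomial p in 2n variables (indexed by Fin n ⊕ Fin n) vanishes on all points
(x,y) with x = 0^n and equals 1 on all points with |x| ≥ 1 and |x|+|y| = n+1, then
deg(p) ≥ n. -/
theorem stmt_15 (n : ℕ) (hn : 1 ≤ n) (p : MvPolynomial (Fin n ⊕ Fin n) ℝ)
    (h0 : ∀ x y : Fin n → Bool, x = (fun _ => false) →
      evalB (Sum.elim x y) p = 0)
    (h1 : ∀ x y : Fin n → Bool, 1 ≤ wt x → wt x + wt y = n + 1 →
      evalB (Sum.elim x y) p = 1) :
    n ≤ p.totalDegree := by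
  by_contra hcon
  push_neg at hcon
  -- basic facts
  have haL : ∀ u : (Fin n ⊕ Fin n) →₀ ℕ, (AuL u).card ≤ n := fun u =>
    le_trans (Finset.card_filter_le _ _) (by simp)
  have haR : ∀ u : (Fin n ⊕ Fin n) →₀ ℕ, (AuR u).card ≤ n := fun u =>
    le_trans (Finset.card_filter_le _ _) (by simp)
  have hdnL : ∀ u : (Fin n ⊕ Fin n) →₀ ℕ, (n.descFactorial (AuL u).card : ℝ) ≠ 0 := by
    intro u
    have := Nat.descFactorial_eq_zero_iff_lt (n := n) (k := (AuL u).card)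
    have hne : n.descFactorial (AuL u).card ≠ 0 := by
      intro h; exact absurd (this.mp h) (not_lt.mpr (haL u))
    exact_mod_cast hne
  have hdnR : ∀ u : (Fin n ⊕ Fin n) →₀ ℕ, (n.descFactorial (AuR u).card : ℝ) ≠ 0 := by
    intro u
    have := Nat.descFactorial_eq_zero_iff_lt (n := n) (k := (AuR u).card)
    have hne : n.descFactorial (AuR u).card ≠ 0 := by
      intro h; exact absurd (this.mp h) (not_lt.mpr (haR u))
    exact_mod_cast hne
  have hab : ∀ u ∈ p.support, (AuL u).card + (AuR u).card ≤ p.totalDegree := by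
    intro u hu
    have h1' : ((AuL u).image Sum.inl ∪ (AuR u).image Sum.inr : Finset (Fin n ⊕ Fin n))
        ⊆ u.support := by
      intro i hi
      rw [Finset.mem_union] at hi
      rw [Finsupp.mem_support_iff]
      rcases hi with hi | hi
      · obtain ⟨a, ha, rfl⟩ := Finset.mem_image.mp hi
        simpa [AuL] using ha
      · obtain ⟨a, ha, rfl⟩ := Finset.mem_image.mp hi
        simpa [AuR] using ha
    have hdisj : Disjoint ((AuL u).image Sum.inl) ((AuR u).image (Sum.inr : Fin n → Fin n ⊕ Fin n)) := by
      refine Finset.disjoint_left.mpr fun i hi hi' => ?_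
      obtain ⟨a, _, rfl⟩ := Finset.mem_image.mp hi
      obtain ⟨b, _, hb⟩ := Finset.mem_image.mp hi'
      exact Sum.inl_ne_inr hb.symm
    have hcard : (AuL u).card + (AuR u).card ≤ u.support.card := by
      have hle := Finset.card_le_card h1'
      rwa [Finset.card_union_of_disjoint hdisj,
        Finset.card_image_of_injective _ Sum.inl_injective,
        Finset.card_image_of_injective _ Sum.inr_injective] at hle
    have hsum : u.support.card ≤ u.sum fun _ e => e := by
      rw [Finsupp.sum]
      calc u.support.card = ∑ _i ∈ u.support, 1 := by simp
        _ ≤ ∑ i ∈ u.support, u i := Finset.sum_le_sum fun i hi =>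
            Nat.one_le_iff_ne_zero.mpr (Finsupp.mem_support_iff.mp hi)
    exact le_trans hcard (le_trans hsum (MvPolynomial.le_totalDegree hu))
  -- the symmetrized function
  set G : ℕ → ℕ → ℝ := fun s t => ∑ u ∈ p.support,
    MvPolynomial.coeff u p * (s.descFactorial (AuL u).card) * (t.descFactorial (AuR u).card)
      / ((n.descFactorial (AuL u).card) * (n.descFactorial (AuR u).card)) with hG
  -- C1
  have C1 : ∀ s t : ℕ, (n.choose s : ℝ) * (n.choose t) * G s t
      = ∑ x ∈ univ.filter (fun x : Fin n → Bool => wt x = s),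
          ∑ y ∈ univ.filter (fun y : Fin n → Bool => wt y = t),
            evalB (Sum.elim x y) p := by
    intro s t
    have hexp : ∀ z : (Fin n ⊕ Fin n) → Bool,
        evalB z p = ∑ u ∈ p.support, MvPolynomial.coeff u p * evalB z (monomial u 1) := by
      intro z
      rw [evalB, MvPolynomial.eval_eq]
      refine Finset.sum_congr rfl fun u _ => ?_
      rw [evalB, eval_monomial, one_mul, Finsupp.prod]
    calc (n.choose s : ℝ) * (n.choose t) * G s t
        = ∑ u ∈ p.support, MvPolynomial.coeff u p
            * ((univ.filter fun x : Fin n → Bool => wt x = s ∧ ∀ i ∈ AuL u, x i = true).card : ℝ)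
            * ((univ.filter fun y : Fin n → Bool => wt y = t ∧ ∀ j ∈ AuR u, y j = true).card : ℝ) := by
          rw [hG, Finset.mul_sum]
          refine Finset.sum_congr rfl fun u _ => ?_
          have eA : ((univ.filter fun x : Fin n → Bool => wt x = s ∧ ∀ i ∈ AuL u, x i = true).card : ℝ)
              = (n.choose s : ℝ) * (s.descFactorial (AuL u).card : ℝ) / (n.descFactorial (AuL u).card : ℝ) := by
            rw [eq_div_iff (hdnL u)]
            exact_mod_cast congrArg (fun m : ℕ => (m : ℝ)) (cnt_mul_dsc n s (AuL u))
          have eB : ((univ.filter fun y : Fin n → Bool => wt y = t ∧ ∀ j ∈ AuR u, y j = true).card : ℝ)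
              = (n.choose t : ℝ) * (t.descFactorial (AuR u).card : ℝ) / (n.descFactorial (AuR u).card : ℝ) := by
            rw [eq_div_iff (hdnR u)]
            exact_mod_cast congrArg (fun m : ℕ => (m : ℝ)) (cnt_mul_dsc n t (AuR u))
          rw [eA, eB]
          field_simp
      _ = ∑ u ∈ p.support, MvPolynomial.coeff u p *
            (∑ x ∈ univ.filter (fun x : Fin n → Bool => wt x = s),
              ∑ y ∈ univ.filter (fun y : Fin n → Bool => wt y = t),
                evalB (Sum.elim x y) (monomial u 1)) := by
          refine Finset.sum_congr rfl fun u _ => ?_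
          rw [slice_sum_mono]
          ring
      _ = ∑ u ∈ p.support,
            ∑ x ∈ univ.filter (fun x : Fin n → Bool => wt x = s),
              ∑ y ∈ univ.filter (fun y : Fin n → Bool => wt y = t),
                MvPolynomial.coeff u p * evalB (Sum.elim x y) (monomial u 1) := by
          refine Finset.sum_congr rfl fun u _ => ?_
          rw [Finset.mul_sum]
          exact Finset.sum_congr rfl fun x _ => Finset.mul_sum _ _ _
      _ = ∑ x ∈ univ.filter (fun x : Fin n → Bool => wt x = s),
            ∑ u ∈ p.support,
              ∑ y ∈ univ.filter (fun y : Fin n → Bool => wt y = t),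
                MvPolynomial.coeff u p * evalB (Sum.elim x y) (monomial u 1) := Finset.sum_comm
      _ = ∑ x ∈ univ.filter (fun x : Fin n → Bool => wt x = s),
            ∑ y ∈ univ.filter (fun y : Fin n → Bool => wt y = t),
              ∑ u ∈ p.support,
                MvPolynomial.coeff u p * evalB (Sum.elim x y) (monomial u 1) :=
          Finset.sum_congr rfl fun x _ => Finset.sum_comm
      _ = _ := Finset.sum_congr rfl fun x _ => Finset.sum_congr rfl fun y _ => (hexp _).symm
  -- the univariate polynomials
  set g : Polynomial ℝ := ∑ u ∈ p.support,
      Polynomial.C (MvPolynomial.coeff u p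
          / ((n.descFactorial (AuL u).card : ℝ) * (n.descFactorial (AuR u).card)))
        * (descPochhammer ℝ (AuL u).card
          * (descPochhammer ℝ (AuR u).card).comp (Polynomial.C ((n : ℝ) + 1) - Polynomial.X))
    with hg
  set h : Polynomial ℝ := ∑ u ∈ p.support,
      Polynomial.C (MvPolynomial.coeff u p * ((Nat.descFactorial 0 (AuL u).card : ℝ))
          / ((n.descFactorial (AuL u).card : ℝ) * (n.descFactorial (AuR u).card)))
        * descPochhammer ℝ (AuR u).card
    with hh
  have C2 : ∀ s : ℕ, s ≤ n + 1 → g.eval (s : ℝ) = G s (n + 1 - s) := by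
    intro s hs
    rw [hg, Polynomial.eval_finset_sum, hG]
    refine Finset.sum_congr rfl fun u _ => ?_
    rw [Polynomial.eval_mul, Polynomial.eval_C, Polynomial.eval_mul, Polynomial.eval_comp,
      Polynomial.eval_sub, Polynomial.eval_C, Polynomial.eval_X]
    have hcast : ((n : ℝ) + 1 - (s : ℝ)) = ((n + 1 - s : ℕ) : ℝ) := by
      rw [Nat.cast_sub hs]
      push_cast
      ring
    rw [hcast, descPochhammer_eval_eq_descFactorial, descPochhammer_eval_eq_descFactorial]
    ring
  have C4 : ∀ t : ℕ, h.eval (t : ℝ) = G 0 t := by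
    intro t
    rw [hh, Polynomial.eval_finset_sum, hG]
    refine Finset.sum_congr rfl fun u _ => ?_
    rw [Polynomial.eval_mul, Polynomial.eval_C, descPochhammer_eval_eq_descFactorial]
    ring
  have hgdeg : g.natDegree ≤ p.totalDegree := by
    rw [hg]
    refine Polynomial.natDegree_sum_le_of_forall_le _ _ fun u hu => ?_
    refine le_trans (Polynomial.natDegree_mul_le) ?_
    rw [Polynomial.natDegree_C]
    refine le_trans (by simp) (le_trans (Polynomial.natDegree_mul_le
      (p := descPochhammer ℝ (AuL u).card)
      (q := (descPochhammer ℝ (AuR u).card).comp (Polynomial.C ((n : ℝ) + 1) - Polynomial.X))) ?_)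
    have h1' : (descPochhammer ℝ (AuL u).card).natDegree = (AuL u).card :=
      descPochhammer_natDegree ℝ _
    have h2' : ((descPochhammer ℝ (AuR u).card).comp
        (Polynomial.C ((n : ℝ) + 1) - Polynomial.X)).natDegree ≤ (AuR u).card := by
      refine le_trans Polynomial.natDegree_comp_le ?_
      rw [descPochhammer_natDegree]
      have : (Polynomial.C ((n : ℝ) + 1) - Polynomial.X).natDegree ≤ 1 := by
        refine le_trans (Polynomial.natDegree_sub_le _ _) ?_
        rw [Polynomial.natDegree_C, Polynomial.natDegree_X]
        omega
      exact le_trans (Nat.mul_le_mul_left _ this) (by omega)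
    calc (descPochhammer ℝ (AuL u).card).natDegree
          + ((descPochhammer ℝ (AuR u).card).comp
            (Polynomial.C ((n : ℝ) + 1) - Polynomial.X)).natDegree
        ≤ (AuL u).card + (AuR u).card := by rw [h1']; exact Nat.add_le_add_left h2' _
      _ ≤ p.totalDegree := hab u hu
  have hhdeg : h.natDegree ≤ p.totalDegree := by
    rw [hh]
    refine Polynomial.natDegree_sum_le_of_forall_le _ _ fun u hu => ?_
    refine le_trans (Polynomial.natDegree_mul_le) ?_
    rw [Polynomial.natDegree_C, descPochhammer_natDegree]
    exact le_trans (by omega : 0 + (AuR u).card ≤ (AuL u).card + (AuR u).card) (hab u hu)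
  -- constraints
  have F1 : ∀ t : ℕ, t ≤ n → G 0 t = 0 := by
    intro t ht
    have hC := C1 0 t
    have hzero : (∑ x ∈ univ.filter (fun x : Fin n → Bool => wt x = 0),
        ∑ y ∈ univ.filter (fun y : Fin n → Bool => wt y = t),
          evalB (Sum.elim x y) p) = 0 := by
      refine Finset.sum_eq_zero fun x hx => ?_
      have hx0 : x = fun _ => false := by
        simp only [mem_filter, mem_univ, true_and] at hx
        rw [wt, Finset.card_eq_zero] at hx
        funext i
        have hi : i ∉ Finset.univ.filter fun j => x j = true := by
          rw [hx]; exact Finset.notMem_empty i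
        simp only [mem_filter, mem_univ, true_and, Bool.not_eq_true] at hi
        exact hi
      exact Finset.sum_eq_zero fun y _ => h0 x y hx0
    rw [hzero] at hC
    have hch : ((n.choose t : ℕ) : ℝ) ≠ 0 := by
      have := Nat.choose_pos ht
      positivity
    have hch0 : ((n.choose 0 : ℕ) : ℝ) = 1 := by simp
    rw [hch0, one_mul] at hC
    exact (mul_eq_zero.mp hC).resolve_left hch
  have F2 : ∀ s : ℕ, 1 ≤ s → s ≤ n → G s (n + 1 - s) = 1 := by
    intro s hs1 hsn
    have hC := C1 s (n + 1 - s)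
    have hone : (∑ x ∈ univ.filter (fun x : Fin n → Bool => wt x = s),
        ∑ y ∈ univ.filter (fun y : Fin n → Bool => wt y = (n + 1 - s)),
          evalB (Sum.elim x y) p)
        = ((n.choose s : ℕ) : ℝ) * ((n.choose (n + 1 - s) : ℕ) : ℝ) := by
      have hval : ∀ x ∈ univ.filter (fun x : Fin n → Bool => wt x = s),
          ∀ y ∈ univ.filter (fun y : Fin n → Bool => wt y = (n + 1 - s)),
            evalB (Sum.elim x y) p = 1 := by
        intro x hx y hy
        simp only [mem_filter, mem_univ, true_and] at hx hy
        exact h1 x y (by omega) (by omega)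
      calc (∑ x ∈ univ.filter (fun x : Fin n → Bool => wt x = s),
          ∑ y ∈ univ.filter (fun y : Fin n → Bool => wt y = (n + 1 - s)),
            evalB (Sum.elim x y) p)
          = ∑ x ∈ univ.filter (fun x : Fin n → Bool => wt x = s),
            ∑ _y ∈ univ.filter (fun y : Fin n → Bool => wt y = (n + 1 - s)), (1:ℝ) :=
            Finset.sum_congr rfl fun x hx => Finset.sum_congr rfl fun y hy => hval x hx y hy
        _ = _ := by
            rw [Finset.sum_const, Finset.sum_const, slice_card, slice_card]
            simp [mul_comm]
    rw [hone] at hC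
    have hchs : ((n.choose s : ℕ) : ℝ) ≠ 0 := by
      have := Nat.choose_pos hsn
      positivity
    have hcht : ((n.choose (n + 1 - s) : ℕ) : ℝ) ≠ 0 := by
      have := Nat.choose_pos (show n + 1 - s ≤ n by omega)
      positivity
    refine mul_left_cancel₀ (mul_ne_zero hchs hcht) ?_
    rw [mul_one]
    exact hC
  -- endgame
  have hhzero : h = 0 := by
    apply Polynomial.eq_zero_of_natDegree_lt_card_of_eval_eq_zero' h
      ((Finset.range (n + 1)).image (fun k : ℕ => (k : ℝ)))
    · intro i hi
      obtain ⟨k, hk, rfl⟩ := Finset.mem_image.mp hi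
      rw [Finset.mem_range] at hk
      rw [C4]
      exact F1 k (by omega)
    · rw [Finset.card_image_of_injective _ Nat.cast_injective, Finset.card_range]
      omega
  have hg0 : g.eval 0 = 0 := by
    have e1 : g.eval ((0 : ℕ) : ℝ) = G 0 (n + 1 - 0) := C2 0 (by omega)
    have e2 : h.eval (((n + 1 : ℕ)) : ℝ) = G 0 (n + 1) := C4 (n + 1)
    rw [hhzero] at e2
    simp only [Polynomial.eval_zero] at e2
    rw [Nat.cast_zero] at e1
    rw [e1, Nat.sub_zero, ← e2]
  have hgone : g = Polynomial.C 1 := by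
    have : g - Polynomial.C 1 = 0 := by
      apply Polynomial.eq_zero_of_natDegree_lt_card_of_eval_eq_zero' (g - Polynomial.C 1)
        ((Finset.Icc 1 n).image (fun k : ℕ => (k : ℝ)))
      · intro i hi
        obtain ⟨k, hk, rfl⟩ := Finset.mem_image.mp hi
        rw [Finset.mem_Icc] at hk
        rw [Polynomial.eval_sub, Polynomial.eval_C, C2 k (by omega), F2 k hk.1 hk.2]
        ring
      · rw [Finset.card_image_of_injective _ Nat.cast_injective, Nat.card_Icc]
        refine lt_of_le_of_lt (le_trans (Polynomial.natDegree_sub_le _ _) ?_) (show p.totalDegree < n + 1 - 1 by omega)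
        simp [hgdeg]
    have := sub_eq_zero.mp this
    exact this
  rw [hgone] at hg0
  simp at hg0
end

section
/- Let f: {0,1}^n → {0,1} be a Boolean function that depends on its i-th variable (i.e., there exists x ∈ {0,1}^n with f(x) ≠ f(x^i), where x^i denotes x with the i-th bit flipped). Then the number of x ∈ {0,1}^n with f(x) ≠ f(x^i) is at least 2^{n − 2·rdeg(f)}; equivalently, the influence Inf_i[f] = Pr_x[f(x) ≠ f(x^i)] is at least 2^{−2·rdeg(f)}. -/
open MvPolynomial

/-- The rational degree of a Boolean function: the minimum of max(deg p, deg q) over all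
rational representations p/q of f by multilinear real polynomials. -/
noncomputable def rdeg {n : ℕ} (f : (Fin n → Bool) → Bool) : ℕ :=
  sInf {d | ∃ p q : MvPolynomial (Fin n) ℝ, Multilinear p ∧ Multilinear q ∧
    (∀ x, evalB x q ≠ 0 ∧ evalB x p / evalB x q = bval (f x)) ∧
    max p.totalDegree q.totalDegree = d}

namespace RDegAux

variable {n : ℕ}

/-- The boolean monomial function attached to a set of variables. -/
noncomputable def mono (S : Finset (Fin n)) (x : Fin n → Bool) : ℝ :=
  ∏ j ∈ S, (if x j then (1:ℝ) else 0)

lemma mono_union (S T : Finset (Fin n)) (x : Fin n → Bool) :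
    mono (S ∪ T) x = mono S x * mono T x := by
  classical
  by_cases h : ∀ j ∈ S ∩ T, x j = true
  · have h2 : mono (S ∩ T) x = 1 := Finset.prod_eq_one (fun j hj => by simp [h j hj])
    have := Finset.prod_union_inter (s₁ := S) (s₂ := T)
      (f := fun j => if x j then (1:ℝ) else 0)
    calc mono (S ∪ T) x = mono (S ∪ T) x * mono (S ∩ T) x := by rw [h2, mul_one]
      _ = mono S x * mono T x := this
  · push_neg at h
    obtain ⟨j, hj, hxj⟩ := h
    have hxj' : (if x j then (1:ℝ) else 0) = 0 := by simp [hxj]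
    have h1 : mono (S ∪ T) x = 0 :=
      Finset.prod_eq_zero (Finset.mem_union_left _ (Finset.mem_of_mem_inter_left hj)) hxj'
    have h2 : mono S x = 0 :=
      Finset.prod_eq_zero (Finset.mem_of_mem_inter_left hj) hxj'
    rw [h1, h2, zero_mul]

lemma mono_decide (A S : Finset (Fin n)) :
    mono S (fun j => decide (j ∈ A)) = if S ⊆ A then 1 else 0 := by
  classical
  split_ifs with h
  · exact Finset.prod_eq_one (fun j hj => by simp [h hj])
  · obtain ⟨j, hjS, hjA⟩ := Finset.not_subset.mp h
    exact Finset.prod_eq_zero hjS (by simp [hjA])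

/-- `g` is representable with multilinear-monomial degree at most `D`. -/
def HasDeg (D : ℕ) (g : (Fin n → Bool) → ℝ) : Prop :=
  ∃ c : Finset (Fin n) → ℝ, (∀ S, c S ≠ 0 → S.card ≤ D) ∧
    ∀ x, g x = ∑ S : Finset (Fin n), c S * mono S x

lemma hasDeg_congr {D : ℕ} {g h : (Fin n → Bool) → ℝ} (e : ∀ x, g x = h x) :
    HasDeg D g → HasDeg D h := by
  rintro ⟨c, hc, hr⟩
  exact ⟨c, hc, fun x => (e x) ▸ hr x⟩

lemma hasDeg_mono {D E : ℕ} {g : (Fin n → Bool) → ℝ} (hDE : D ≤ E) :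
    HasDeg D g → HasDeg E g := by
  rintro ⟨c, hc, hr⟩
  exact ⟨c, fun S hS => le_trans (hc S hS) hDE, hr⟩

lemma hasDeg_const (a : ℝ) : HasDeg 0 (fun _ : Fin n → Bool => a) := by
  classical
  refine ⟨fun S => if S = ∅ then a else 0, ?_, ?_⟩
  · intro S hS
    by_cases h : S = ∅
    · simp [h]
    · simp [h] at hS
  · intro x
    have h1 : ∀ S ∈ (Finset.univ : Finset (Finset (Fin n))),
        (if S = ∅ then a else 0) * mono S x = if S = ∅ then a * mono S x else 0 := by
      intro S _; split <;> simp
    rw [Finset.sum_congr rfl h1, Finset.sum_ite_eq' Finset.univ ∅ (fun S => a * mono S x)]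
    simp [mono]

lemma hasDeg_bvar (j : Fin n) : HasDeg 1 (fun x => if x j then (1:ℝ) else 0) := by
  classical
  refine ⟨fun S => if S = {j} then 1 else 0, ?_, ?_⟩
  · intro S hS
    by_cases h : S = ({j} : Finset (Fin n))
    · simp [h]
    · simp [h] at hS
  · intro x
    have h1 : ∀ S ∈ (Finset.univ : Finset (Finset (Fin n))),
        (if S = {j} then (1:ℝ) else 0) * mono S x = if S = {j} then mono S x else 0 := by
      intro S _; split <;> simp
    rw [Finset.sum_congr rfl h1, Finset.sum_ite_eq' Finset.univ {j} (fun S => mono S x)]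
    simp [mono]

lemma hasDeg_add {D : ℕ} {g h : (Fin n → Bool) → ℝ} (hg : HasDeg D g) (hh : HasDeg D h) :
    HasDeg D (fun x => g x + h x) := by
  obtain ⟨c, hc, hcr⟩ := hg
  obtain ⟨d, hd, hdr⟩ := hh
  refine ⟨fun S => c S + d S, ?_, ?_⟩
  · intro S hS
    by_cases h1 : c S ≠ 0
    · exact hc S h1
    · push_neg at h1
      refine hd S ?_
      intro h2; apply hS; simp only [h1, h2, add_zero]
  · intro x
    simp only
    rw [hcr x, hdr x, ← Finset.sum_add_distrib]
    exact Finset.sum_congr rfl (fun S _ => by ring)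

lemma hasDeg_neg {D : ℕ} {g : (Fin n → Bool) → ℝ} (hg : HasDeg D g) :
    HasDeg D (fun x => - g x) := by
  obtain ⟨c, hc, hcr⟩ := hg
  refine ⟨fun S => - c S, fun S hS => hc S (by simpa using hS), fun x => ?_⟩
  simp only
  rw [hcr x, ← Finset.sum_neg_distrib]
  exact Finset.sum_congr rfl (fun S _ => by ring)

lemma hasDeg_sub {D : ℕ} {g h : (Fin n → Bool) → ℝ} (hg : HasDeg D g) (hh : HasDeg D h) :
    HasDeg D (fun x => g x - h x) := by
  have := hasDeg_add hg (hasDeg_neg hh)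
  exact hasDeg_congr (fun x => by ring) this

lemma hasDeg_mul {D E : ℕ} {g h : (Fin n → Bool) → ℝ} (hg : HasDeg D g) (hh : HasDeg E h) :
    HasDeg (D + E) (fun x => g x * h x) := by
  classical
  obtain ⟨c, hc, hcr⟩ := hg
  obtain ⟨d, hd, hdr⟩ := hh
  refine ⟨fun U => ∑ P : Finset (Fin n) × Finset (Fin n),
      if P.1 ∪ P.2 = U then c P.1 * d P.2 else 0, ?_, ?_⟩
  · intro U hU
    obtain ⟨P, _, hP⟩ := Finset.exists_ne_zero_of_sum_ne_zero hU
    by_cases h1 : P.1 ∪ P.2 = U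
    · rw [if_pos h1] at hP
      have h2 : c P.1 ≠ 0 := fun h => hP (by rw [h, zero_mul])
      have h3 : d P.2 ≠ 0 := fun h => hP (by rw [h, mul_zero])
      calc U.card = (P.1 ∪ P.2).card := by rw [h1]
        _ ≤ P.1.card + P.2.card := Finset.card_union_le _ _
        _ ≤ D + E := Nat.add_le_add (hc _ h2) (hd _ h3)
    · rw [if_neg h1] at hP; exact absurd rfl hP
  · intro x
    simp only
    rw [hcr x, hdr x]
    calc (∑ S : Finset (Fin n), c S * mono S x) * (∑ S : Finset (Fin n), d S * mono S x)
        = ∑ P : Finset (Fin n) × Finset (Fin n),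
            (c P.1 * mono P.1 x) * (d P.2 * mono P.2 x) := by
          rw [Finset.sum_mul_sum, ← Finset.univ_product_univ, Finset.sum_product]
      _ = ∑ P : Finset (Fin n) × Finset (Fin n), ∑ U : Finset (Fin n),
            if P.1 ∪ P.2 = U then c P.1 * d P.2 * mono U x else 0 := by
          refine Finset.sum_congr rfl (fun P _ => ?_)
          rw [Finset.sum_ite_eq Finset.univ (P.1 ∪ P.2)
            (fun U => c P.1 * d P.2 * mono U x), if_pos (Finset.mem_univ _), mono_union]
          ring
      _ = ∑ U : Finset (Fin n), ∑ P : Finset (Fin n) × Finset (Fin n),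
            (if P.1 ∪ P.2 = U then c P.1 * d P.2 else 0) * mono U x := by
          rw [Finset.sum_comm]
          refine Finset.sum_congr rfl fun U _ => Finset.sum_congr rfl fun P _ => ?_
          split <;> simp
      _ = ∑ U : Finset (Fin n),
            (∑ P : Finset (Fin n) × Finset (Fin n),
              if P.1 ∪ P.2 = U then c P.1 * d P.2 else 0) * mono U x := by
          refine Finset.sum_congr rfl fun U _ => ?_
          rw [Finset.sum_mul]

lemma hasDeg_sum {ι : Type*} {D : ℕ} (s : Finset ι) (F : ι → (Fin n → Bool) → ℝ)
    (h : ∀ j ∈ s, HasDeg D (F j)) : HasDeg D (fun x => ∑ j ∈ s, F j x) := by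
  classical
  induction s using Finset.cons_induction with
  | empty =>
      have h0 : HasDeg D (fun _ : Fin n → Bool => (0:ℝ)) :=
        hasDeg_mono (Nat.zero_le D) (hasDeg_const 0)
      exact hasDeg_congr (fun x => by simp) h0
  | cons a s ha ih =>
      have h1 := hasDeg_add (h a (Finset.mem_cons_self a s))
        (ih (fun j hj => h j (Finset.mem_cons_of_mem hj)))
      exact hasDeg_congr (fun x => by rw [Finset.sum_cons]) h1

lemma hasDeg_prod {ι : Type*} (s : Finset ι) (F : ι → (Fin n → Bool) → ℝ)
    (h : ∀ j ∈ s, HasDeg 1 (F j)) : HasDeg s.card (fun x => ∏ j ∈ s, F j x) := by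
  classical
  induction s using Finset.cons_induction with
  | empty => exact hasDeg_congr (fun x => by simp) (hasDeg_const 1)
  | cons a s ha ih =>
      have h1 := hasDeg_mul (h a (Finset.mem_cons_self a s))
        (ih (fun j hj => h j (Finset.mem_cons_of_mem hj)))
      rw [Finset.card_cons]
      refine hasDeg_congr (fun x => by rw [Finset.prod_cons])
        (hasDeg_mono (by omega) h1)

lemma hasDeg_eval (p : MvPolynomial (Fin n) ℝ) (v : (Fin n → Bool) → Fin n → ℝ)
    (hv01 : ∀ x j, v x j = 0 ∨ v x j = 1) (hv : ∀ j, HasDeg 1 (fun x => v x j)) :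
    HasDeg p.totalDegree (fun x => MvPolynomial.eval (v x) p) := by
  classical
  have key : ∀ x, MvPolynomial.eval (v x) p
      = ∑ d ∈ p.support, MvPolynomial.coeff d p * ∏ j ∈ d.support, v x j := by
    intro x
    rw [MvPolynomial.eval_eq]
    refine Finset.sum_congr rfl (fun d _ => ?_)
    congr 1
    refine Finset.prod_congr rfl (fun j hj => ?_)
    have hdj : d j ≠ 0 := Finsupp.mem_support_iff.mp hj
    rcases hv01 x j with h | h <;> rw [h]
    · rw [zero_pow hdj]
    · rw [one_pow]
  refine hasDeg_congr (fun x => (key x).symm) ?_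
  refine hasDeg_sum _ _ (fun d hd => ?_)
  have h1 : HasDeg (0 + d.support.card)
      (fun x => MvPolynomial.coeff d p * ∏ j ∈ d.support, v x j) :=
    hasDeg_mul (hasDeg_const _) (hasDeg_prod _ _ (fun j _ => hv j))
  refine hasDeg_mono ?_ h1
  rw [Nat.zero_add]
  calc d.support.card = ∑ j ∈ d.support, 1 := by simp
    _ ≤ ∑ j ∈ d.support, d j := Finset.sum_le_sum
        (fun j hj => Nat.one_le_iff_ne_zero.mpr (Finsupp.mem_support_iff.mp hj))
    _ ≤ p.totalDegree := MvPolynomial.le_totalDegree hd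

lemma hasDeg_evalB (p : MvPolynomial (Fin n) ℝ) :
    HasDeg p.totalDegree (fun x => evalB x p) := by
  refine hasDeg_eval p (fun x j => if x j then 1 else 0) ?_ ?_
  · intro x j; by_cases h : x j <;> simp [h]
  · exact fun j => hasDeg_bvar j

lemma hasDeg_evalB_flip (i : Fin n) (p : MvPolynomial (Fin n) ℝ) :
    HasDeg p.totalDegree (fun x => evalB (Function.update x i (!(x i))) p) := by
  classical
  refine hasDeg_eval p (fun x j => if (Function.update x i (!(x i))) j then 1 else 0) ?_ ?_
  · intro x j; by_cases h : (Function.update x i (!(x i))) j <;> simp [h]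
  · intro j
    by_cases hji : j = i
    · subst hji
      have h1 := hasDeg_sub (hasDeg_mono (Nat.zero_le 1) (hasDeg_const (1:ℝ))) (hasDeg_bvar j)
      refine hasDeg_congr (fun x => ?_) h1
      simp only [Function.update_self]
      by_cases h : x j <;> simp [h]
    · refine hasDeg_congr (fun x => ?_) (hasDeg_bvar j)
      simp only [Function.update_of_ne hji]

lemma sum_powerset_union {A B : Finset (Fin n)} (hd : Disjoint A B) (F : Finset (Fin n) → ℝ) :
    ∑ S ∈ (A ∪ B).powerset, F S = ∑ T ∈ A.powerset, ∑ U ∈ B.powerset, F (T ∪ U) := by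
  classical
  rw [← Finset.sum_product' (s := A.powerset) (t := B.powerset)
    (f := fun T U => F (T ∪ U))]
  refine Finset.sum_nbij' (i := fun S => (S ∩ A, S ∩ B)) (j := fun P => P.1 ∪ P.2)
    ?_ ?_ ?_ ?_ ?_
  · intro S hS
    rw [Finset.mem_powerset] at hS
    rw [Finset.mem_product]
    exact ⟨Finset.mem_powerset.mpr Finset.inter_subset_right,
      Finset.mem_powerset.mpr Finset.inter_subset_right⟩
  · intro P hP
    rw [Finset.mem_product] at hP
    rw [Finset.mem_powerset]
    exact Finset.union_subset_union (Finset.mem_powerset.mp hP.1) (Finset.mem_powerset.mp hP.2)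
  · intro S hS
    rw [Finset.mem_powerset] at hS
    simp only
    rw [← Finset.inter_union_distrib_left, Finset.inter_eq_left.mpr hS]
  · rintro ⟨P1, P2⟩ hP
    rw [Finset.mem_product] at hP
    have h1 : P1 ⊆ A := Finset.mem_powerset.mp hP.1
    have h2 : P2 ⊆ B := Finset.mem_powerset.mp hP.2
    have d1 : Disjoint P2 A := Finset.disjoint_left.mpr
      (fun a ha hA => Finset.disjoint_right.mp hd (h2 ha) hA)
    have d2 : Disjoint P1 B := Finset.disjoint_left.mpr
      (fun a ha hB => Finset.disjoint_left.mp hd (h1 ha) hB)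
    have e1 : (P1 ∪ P2) ∩ A = P1 := by
      rw [Finset.union_inter_distrib_right, Finset.inter_eq_left.mpr h1,
        Finset.disjoint_iff_inter_eq_empty.mp d1, Finset.union_empty]
    have e2 : (P1 ∪ P2) ∩ B = P2 := by
      rw [Finset.union_inter_distrib_right, Finset.inter_eq_left.mpr h2,
        Finset.disjoint_iff_inter_eq_empty.mp d2, Finset.empty_union]
    simp only [Prod.mk.injEq]
    exact ⟨e1, e2⟩
  · intro S hS
    simp only
    rw [Finset.mem_powerset] at hS
    rw [← Finset.inter_union_distrib_left, Finset.inter_eq_left.mpr hS]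

lemma core {D : ℕ} {g : (Fin n → Bool) → ℝ} (hg : HasDeg D g) {x₀ : Fin n → Bool}
    (h0 : g x₀ ≠ 0) (s : Finset (Fin n → Bool)) (hs : ∀ x, g x ≠ 0 → x ∈ s) :
    2 ^ n ≤ s.card * 2 ^ D := by
  classical
  obtain ⟨c, hc, hrep⟩ := hg
  have hcne : ∃ S, c S ≠ 0 := by
    by_contra hcon
    push_neg at hcon
    apply h0
    rw [hrep]
    exact Finset.sum_eq_zero (fun S _ => by rw [hcon S, zero_mul])
  obtain ⟨S₀, hS₀mem, hS₀max⟩ := Finset.exists_max_image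
    (Finset.univ.filter fun S : Finset (Fin n) => c S ≠ 0) Finset.card
    (by obtain ⟨S, hS⟩ := hcne; exact ⟨S, by simp [hS]⟩)
  have hS₀ : c S₀ ≠ 0 := (Finset.mem_filter.mp hS₀mem).2
  have hS₀card : S₀.card ≤ D := hc _ hS₀
  -- key existence of a nonzero point in every subcube determined outside S₀
  have key : ∀ y : Fin n → Bool, ∃ x : Fin n → Bool,
      (∀ j, j ∉ S₀ → x j = y j) ∧ g x ≠ 0 := by
    intro y
    set Uy : Finset (Fin n) := Finset.univ.filter (fun j => j ∉ S₀ ∧ y j = true) with hUy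
    have hdisj : Disjoint S₀ Uy := Finset.disjoint_left.mpr
      (fun a ha hu => ((Finset.mem_filter.mp hu).2.1 ha))
    set cy : Finset (Fin n) → ℝ := fun T => ∑ U ∈ Uy.powerset, c (T ∪ U) with hcy
    have hcyS₀ : cy S₀ = c S₀ := by
      rw [hcy]
      simp only
      rw [Finset.sum_eq_single_of_mem ∅ (Finset.empty_mem_powerset _)]
      · rw [Finset.union_empty]
      · intro U hU hUne
        by_contra hne
        have hmem : S₀ ∪ U ∈ Finset.univ.filter (fun S : Finset (Fin n) => c S ≠ 0) :=
          Finset.mem_filter.mpr ⟨Finset.mem_univ _, hne⟩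
        have hle := hS₀max _ hmem
        have hss : S₀ ⊂ S₀ ∪ U := by
          refine (Finset.ssubset_iff_of_subset Finset.subset_union_left).mpr ?_
          obtain ⟨a, haU⟩ := Finset.nonempty_iff_ne_empty.mpr hUne
          refine ⟨a, Finset.mem_union_right _ haU, ?_⟩
          exact Finset.disjoint_right.mp hdisj (Finset.mem_powerset.mp hU haU)
        have hlt : S₀.card < (S₀ ∪ U).card := Finset.card_lt_card hss
        omega
    obtain ⟨T₀, hT₀mem, hT₀min⟩ := Finset.exists_min_image
      (S₀.powerset.filter fun T => cy T ≠ 0) Finset.card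
      ⟨S₀, Finset.mem_filter.mpr ⟨Finset.mem_powerset_self _, by rw [hcyS₀]; exact hS₀⟩⟩
    have hT₀sub : T₀ ⊆ S₀ := Finset.mem_powerset.mp (Finset.mem_filter.mp hT₀mem).1
    have hT₀ne : cy T₀ ≠ 0 := (Finset.mem_filter.mp hT₀mem).2
    have hdisjT : Disjoint T₀ Uy := hdisj.mono_left hT₀sub
    refine ⟨fun j => decide (j ∈ T₀ ∪ Uy), ?_, ?_⟩
    · intro j hj
      have h1 : (j ∈ T₀ ∪ Uy) ↔ (y j = true) := by
        rw [Finset.mem_union]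
        constructor
        · rintro (h | h)
          · exact absurd (hT₀sub h) hj
          · exact (Finset.mem_filter.mp h).2.2
        · intro h
          exact Or.inr (Finset.mem_filter.mpr ⟨Finset.mem_univ _, hj, h⟩)
      by_cases h : y j = true
      · simp [h1, h]
      · simp only [Bool.not_eq_true] at h
        simp [h1, h]
    · have hx : g (fun j => decide (j ∈ T₀ ∪ Uy)) = cy T₀ := by
        rw [hrep]
        have h1 : ∀ S ∈ (Finset.univ : Finset (Finset (Fin n))),
            c S * mono S (fun j => decide (j ∈ T₀ ∪ Uy))
            = if S ∈ (T₀ ∪ Uy).powerset then c S else 0 := by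
          intro S _
          simp only [mono_decide, Finset.mem_powerset]
          split <;> simp
        have hz : ∀ T ∈ T₀.powerset, T ≠ T₀ → (∑ U ∈ Uy.powerset, c (T ∪ U)) = 0 := by
          intro T hT hTne
          by_contra hcyT
          have hTS₀ : T ⊆ S₀ := (Finset.mem_powerset.mp hT).trans hT₀sub
          have hTmem : T ∈ S₀.powerset.filter (fun T => cy T ≠ 0) :=
            Finset.mem_filter.mpr ⟨Finset.mem_powerset.mpr hTS₀, hcyT⟩
          have hle := hT₀min _ hTmem
          have hlt : T.card < T₀.card :=
            Finset.card_lt_card (lt_of_le_of_ne (Finset.mem_powerset.mp hT) hTne)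
          omega
        rw [Finset.sum_congr rfl h1, Finset.sum_ite_mem, Finset.univ_inter,
          sum_powerset_union hdisjT,
          Finset.sum_eq_single_of_mem T₀ (Finset.mem_powerset_self _) hz]
      rw [hx]
      exact hT₀ne
  choose φ hφa hφn using key
  set ρ : (Fin n → Bool) → (Fin n → Bool) :=
    fun x j => if j ∈ S₀ then false else x j with hρ
  have hρρ : ∀ x, ρ (ρ x) = ρ x := by
    intro x; funext j
    by_cases h : j ∈ S₀ <;> simp [hρ, h]
  have hρφ : ∀ y, ρ (φ y) = ρ y := by
    intro y; funext j
    by_cases h : j ∈ S₀ <;> simp [hρ, h, hφa y j]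
  have hfiber : ∀ a ∈ Finset.univ.image (fun x => φ (ρ x)),
      (Finset.univ.filter fun x : Fin n → Bool => φ (ρ x) = a).card ≤ 2 ^ S₀.card := by
    intro a _
    have hsub : (Finset.univ.filter fun x : Fin n → Bool => φ (ρ x) = a)
        ⊆ (Finset.univ.filter fun x : Fin n → Bool => ρ x = ρ a) := by
      intro x hx
      have h1 : φ (ρ x) = a := (Finset.mem_filter.mp hx).2
      have h2 : ρ (φ (ρ x)) = ρ a := by rw [h1]
      rw [hρφ, hρρ] at h2
      exact Finset.mem_filter.mpr ⟨Finset.mem_univ _, h2⟩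
    refine le_trans (Finset.card_le_card hsub) ?_
    have hinj : (Finset.univ.filter fun x : Fin n → Bool => ρ x = ρ a).card
        ≤ (Finset.univ : Finset ({j // j ∈ S₀} → Bool)).card := by
      refine Finset.card_le_card_of_injOn (fun x (j : {j // j ∈ S₀}) => x j.1)
        (fun _ _ => Finset.mem_univ _) ?_
      intro x hx x' hx' hxx'
      funext j
      by_cases hj : j ∈ S₀
      · exact congrFun hxx' ⟨j, hj⟩
      · have e1 : ρ x = ρ a := (Finset.mem_filter.mp hx).2
        have e2 : ρ x' = ρ a := (Finset.mem_filter.mp hx').2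
        have := congrFun (e1.trans e2.symm) j
        simpa [hρ, hj] using this
    refine le_trans hinj ?_
    rw [Finset.card_univ, Fintype.card_fun]
    simp [Fintype.card_coe]
  have main := Finset.card_le_mul_card_image (f := fun x => φ (ρ x))
    (Finset.univ : Finset (Fin n → Bool)) (2 ^ S₀.card) hfiber
  have himg : (Finset.univ.image fun x => φ (ρ x)) ⊆ s := by
    intro a ha
    obtain ⟨x, _, hxa⟩ := Finset.mem_image.mp ha
    exact hxa ▸ hs _ (hφn (ρ x))
  have huniv : (Finset.univ : Finset (Fin n → Bool)).card = 2 ^ n := by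
    rw [Finset.card_univ, Fintype.card_fun]
    simp
  calc 2 ^ n = (Finset.univ : Finset (Fin n → Bool)).card := huniv.symm
    _ ≤ 2 ^ S₀.card * (Finset.univ.image fun x => φ (ρ x)).card := main
    _ ≤ 2 ^ D * s.card := Nat.mul_le_mul (Nat.pow_le_pow_right (by norm_num) hS₀card)
        (Finset.card_le_card himg)
    _ = s.card * 2 ^ D := Nat.mul_comm _ _


lemma degreeOf_finset_sum_le {ι : Type*} (s : Finset ι) (F : ι → MvPolynomial (Fin n) ℝ)
    (i : Fin n) (k : ℕ) (h : ∀ a ∈ s, MvPolynomial.degreeOf i (F a) ≤ k) :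
    MvPolynomial.degreeOf i (∑ a ∈ s, F a) ≤ k := by
  classical
  induction s using Finset.cons_induction with
  | empty => simp [MvPolynomial.degreeOf_zero]
  | cons a s ha ih =>
      rw [Finset.sum_cons]
      refine le_trans (MvPolynomial.degreeOf_add_le _ _ _) (max_le ?_ ?_)
      · exact h a (Finset.mem_cons_self a s)
      · exact ih (fun b hb => h b (Finset.mem_cons_of_mem hb))

lemma degreeOf_finset_prod_le {ι : Type*} (s : Finset ι) (F : ι → MvPolynomial (Fin n) ℝ)
    (i : Fin n) :
    MvPolynomial.degreeOf i (∏ a ∈ s, F a) ≤ ∑ a ∈ s, MvPolynomial.degreeOf i (F a) := by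
  classical
  induction s using Finset.cons_induction with
  | empty =>
      rw [Finset.prod_empty, Finset.sum_empty, ← MvPolynomial.C_1, MvPolynomial.degreeOf_C]
  | cons a s ha ih =>
      rw [Finset.prod_cons, Finset.sum_cons]
      exact le_trans (MvPolynomial.degreeOf_mul_le _ _ _) (Nat.add_le_add le_rfl ih)

/-- The indicator polynomial of a point of the cube. -/
noncomputable def indPoly (a : Fin n → Bool) : MvPolynomial (Fin n) ℝ :=
  ∏ j, (if a j then (MvPolynomial.X j : MvPolynomial (Fin n) ℝ) else 1 - MvPolynomial.X j)

lemma degreeOf_factor_le (a : Fin n → Bool) (i j : Fin n) :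
    MvPolynomial.degreeOf i
      (if a j then (MvPolynomial.X j : MvPolynomial (Fin n) ℝ) else 1 - MvPolynomial.X j)
      ≤ if j = i then 1 else 0 := by
  classical
  have hX : MvPolynomial.degreeOf i (MvPolynomial.X j : MvPolynomial (Fin n) ℝ)
      ≤ if j = i then 1 else 0 := by
    rw [MvPolynomial.degreeOf_X]
    by_cases h : i = j
    · subst h; simp
    · simp [h, fun hh : j = i => h hh.symm]
  have h1X : MvPolynomial.degreeOf i (1 - MvPolynomial.X j : MvPolynomial (Fin n) ℝ)
      ≤ if j = i then 1 else 0 := by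
    refine le_trans (MvPolynomial.degreeOf_sub_le _ _ _) (max_le ?_ (by exact hX))
    have : (1 : MvPolynomial (Fin n) ℝ) = MvPolynomial.C 1 := by simp
    rw [this, MvPolynomial.degreeOf_C]
    exact Nat.zero_le _
  split <;> assumption

lemma multilinear_indPoly (a : Fin n → Bool) : Multilinear (indPoly a) := by
  classical
  intro i
  refine le_trans (degreeOf_finset_prod_le Finset.univ _ i) ?_
  calc ∑ j, MvPolynomial.degreeOf i
        (if a j then (MvPolynomial.X j : MvPolynomial (Fin n) ℝ) else 1 - MvPolynomial.X j)
      ≤ ∑ j, if j = i then 1 else 0 :=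
        Finset.sum_le_sum (fun j _ => degreeOf_factor_le a i j)
    _ = 1 := by rw [Finset.sum_ite_eq' Finset.univ i (fun _ => 1)]; simp

lemma evalB_indPoly (a x : Fin n → Bool) :
    evalB x (indPoly a) = if a = x then 1 else 0 := by
  classical
  rw [evalB, indPoly, map_prod]
  have hfac : ∀ j, MvPolynomial.eval (fun i => if x i then (1:ℝ) else 0)
      (if a j then (MvPolynomial.X j : MvPolynomial (Fin n) ℝ) else 1 - MvPolynomial.X j)
      = if a j = x j then 1 else 0 := by
    intro j
    by_cases h : a j <;> by_cases h' : x j <;> simp [h, h']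
  rw [Finset.prod_congr rfl (fun j _ => hfac j)]
  by_cases h : a = x
  · subst h; simp
  · have : ∃ j, a j ≠ x j := by
      by_contra hc
      push_neg at hc
      exact h (funext hc)
    obtain ⟨j, hj⟩ := this
    rw [if_neg h]
    exact Finset.prod_eq_zero (Finset.mem_univ j) (by simp [hj])

lemma rdeg_set_nonempty (f : (Fin n → Bool) → Bool) :
    {d | ∃ p q : MvPolynomial (Fin n) ℝ, Multilinear p ∧ Multilinear q ∧
      (∀ x, evalB x q ≠ 0 ∧ evalB x p / evalB x q = bval (f x)) ∧
      max p.totalDegree q.totalDegree = d}.Nonempty := by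
  classical
  set p : MvPolynomial (Fin n) ℝ :=
    ∑ a : Fin n → Bool, (if f a then indPoly a else 0) with hp
  refine ⟨_, p, 1, ?_, ?_, ?_, rfl⟩
  · intro i
    refine degreeOf_finset_sum_le Finset.univ _ i 1 (fun a _ => ?_)
    by_cases h : f a
    · simpa [h] using multilinear_indPoly a i
    · simp [h, MvPolynomial.degreeOf_zero]
  · intro i
    have : (1 : MvPolynomial (Fin n) ℝ) = MvPolynomial.C 1 := by simp
    rw [this, MvPolynomial.degreeOf_C]
    exact Nat.zero_le _
  · intro x
    have hq1 : evalB x (1 : MvPolynomial (Fin n) ℝ) = 1 := by simp [evalB]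
    refine ⟨by rw [hq1]; norm_num, ?_⟩
    rw [hq1, div_one, hp, evalB, map_sum]
    have h1 : ∀ a ∈ (Finset.univ : Finset (Fin n → Bool)),
        MvPolynomial.eval (fun i => if x i then (1:ℝ) else 0) (if f a then indPoly a else 0)
        = if a = x then (if f a then (1:ℝ) else 0) else 0 := by
      intro a _
      by_cases h : f a
      · rw [if_pos h]
        have := evalB_indPoly a x
        rw [evalB] at this
        rw [this]
        by_cases h' : a = x
        · subst h'; simp [h]
        · simp [h']
      · simp [h]
    rw [Finset.sum_congr rfl h1, Finset.sum_ite_eq' Finset.univ x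
      (fun a => if f a then (1:ℝ) else 0)]
    simp [bval]

end RDegAux

/-- If a Boolean function f depends on its i-th variable, then the number of points x with
f(x) ≠ f(x^i) is at least 2^{n − 2·rdeg(f)}, i.e. Inf_i[f] ≥ 2^{−2·rdeg(f)}.
(Stated multiplicatively over ℕ to avoid truncated subtraction.) -/
theorem stmt_16 (n : ℕ) (f : (Fin n → Bool) → Bool) (i : Fin n)
    (hdep : ∃ x : Fin n → Bool, f x ≠ f (Function.update x i (!(x i)))) :
    2 ^ n ≤
      (Finset.univ.filter
        (fun x : Fin n → Bool => f x ≠ f (Function.update x i (!(x i))))).card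
        * 2 ^ (2 * rdeg f) := by
  classical
  obtain ⟨p, q, hp, hq, hpq, hmax⟩ := Nat.sInf_mem (RDegAux.rdeg_set_nonempty f)
  have hmax' : max p.totalDegree q.totalDegree = rdeg f := hmax
  have hdp : p.totalDegree ≤ rdeg f := hmax' ▸ le_max_left _ _
  have hdq : q.totalDegree ≤ rdeg f := hmax' ▸ le_max_right _ _
  set G : (Fin n → Bool) → ℝ := fun x =>
    evalB x p * evalB (Function.update x i (!(x i))) q
      - evalB (Function.update x i (!(x i))) p * evalB x q with hG
  have hpx : ∀ x, evalB x p = bval (f x) * evalB x q := by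
    intro x
    obtain ⟨h1, h2⟩ := hpq x
    rw [div_eq_iff h1] at h2
    rw [h2]
  have hGeq : ∀ x, G x = (bval (f x) - bval (f (Function.update x i (!(x i)))))
      * (evalB x q * evalB (Function.update x i (!(x i))) q) := by
    intro x
    rw [hG]
    simp only
    rw [hpx x, hpx (Function.update x i (!(x i)))]
    ring
  have hbval : ∀ a b : Bool, bval a - bval b ≠ 0 ↔ a ≠ b := by
    intro a b; cases a <;> cases b <;> simp [bval]
  have hGne : ∀ x, G x ≠ 0 ↔ f x ≠ f (Function.update x i (!(x i))) := by
    intro x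
    rw [hGeq x]
    constructor
    · intro h hfe
      apply h
      rw [hfe, sub_self, zero_mul]
    · intro h
      exact mul_ne_zero ((hbval _ _).mpr h)
        (mul_ne_zero (hpq x).1 (hpq _).1)
  have hGdeg : RDegAux.HasDeg (2 * rdeg f) G := by
    have h1 : RDegAux.HasDeg (rdeg f) (fun x => evalB x p) :=
      RDegAux.hasDeg_mono hdp (RDegAux.hasDeg_evalB p)
    have h2 : RDegAux.HasDeg (rdeg f) (fun x => evalB (Function.update x i (!(x i))) q) :=
      RDegAux.hasDeg_mono hdq (RDegAux.hasDeg_evalB_flip i q)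
    have h3 : RDegAux.HasDeg (rdeg f) (fun x => evalB (Function.update x i (!(x i))) p) :=
      RDegAux.hasDeg_mono hdp (RDegAux.hasDeg_evalB_flip i p)
    have h4 : RDegAux.HasDeg (rdeg f) (fun x => evalB x q) :=
      RDegAux.hasDeg_mono hdq (RDegAux.hasDeg_evalB q)
    have h5 := RDegAux.hasDeg_sub (RDegAux.hasDeg_mul h1 h2) (RDegAux.hasDeg_mul h3 h4)
    rw [two_mul]
    exact RDegAux.hasDeg_congr (fun x => rfl) h5
  obtain ⟨x₀, hx₀⟩ := hdep
  exact RDegAux.core hGdeg ((hGne x₀).mpr hx₀)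
    (Finset.univ.filter fun x => f x ≠ f (Function.update x i (!(x i))))
    (fun x hx => Finset.mem_filter.mpr ⟨Finset.mem_univ _, (hGne x).mp hx⟩)
end

section
/- Let n be even and let f: {0,1}^n → {0,1} be defined by f(x) = 0 if and only if |x| = n/2. Then sdeg(f) ≤ 2, while bs_z(f) ≥ n at the point z = 1^{n/2}0^{n/2} (so max_{x∈{0,1}^n} bs_x(f) ≥ n). -/
open MvPolynomial

/-- The sign degree of a Boolean function: the minimum degree of a multilinear real
polynomial that is nonzero on the cube and negative exactly on f⁻¹(1). -/
noncomputable def sdeg {n : ℕ} (f : (Fin n → Bool) → Bool) : ℕ :=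
  sInf {d | ∃ p : MvPolynomial (Fin n) ℝ, Multilinear p ∧ (∀ x, evalB x p ≠ 0) ∧
    (∀ x, evalB x p < 0 ↔ f x = true) ∧ p.totalDegree = d}

/-- `flipSet x B` is `x` with all bits in `B` flipped. -/
def flipSet {n : ℕ} (x : Fin n → Bool) (B : Finset (Fin n)) : Fin n → Bool :=
  fun i => if i ∈ B then !(x i) else x i

/-- The block sensitivity of `f` at `x`: the maximum number of pairwise disjoint
sensitive blocks of `f` at `x`. -/
noncomputable def bs {n : ℕ} (f : (Fin n → Bool) → Bool) (x : Fin n → Bool) : ℕ :=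
  sSup {k | ∃ Bs : Fin k → Finset (Fin n),
    (∀ i, f (flipSet x (Bs i)) ≠ f x) ∧ (∀ i j, i ≠ j → Disjoint (Bs i) (Bs j))}

/-- For even n, the function f with f(x) = 0 iff |x| = n/2 has sdeg(f) ≤ 2, but block
sensitivity at least n at the point z = 1^{n/2}0^{n/2} (so max_x bs_x(f) ≥ n). -/
theorem stmt_19 (n : ℕ) (hn : Even n) (f : (Fin n → Bool) → Bool)
    (hf : ∀ x : Fin n → Bool, f x = false ↔ wt x = n / 2) :
    sdeg f ≤ 2 ∧ n ≤ bs f (fun i => decide ((i : ℕ) < n / 2)) := by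
  classical
  set c : ℕ := n / 2 with hc
  have hnc : (n : ℝ) = 2 * c := by
    obtain ⟨m, hm⟩ := hn
    have : c = m := by omega
    rw [this, hm]; push_cast; ring
  constructor
  · -- sign degree ≤ 2
    set P : MvPolynomial (Fin n) ℝ :=
      C (1/2 - (c:ℝ)^2) + C ((n:ℝ) - 1) * (∑ i, X i)
        - ∑ p ∈ Finset.univ.offDiag, X p.1 * X p.2 with hP
    have hmul : Multilinear P := by
      intro k
      refine (degreeOf_sub_le _ _ _).trans (max_le ?_ ?_)
      · refine (degreeOf_add_le _ _ _).trans (max_le ?_ ?_)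
        · rw [degreeOf_C]; omega
        · refine (degreeOf_mul_le _ _ _).trans ?_
          have h1 : degreeOf k (C ((n:ℝ)-1) : MvPolynomial (Fin n) ℝ) = 0 :=
            degreeOf_C _ _
          have h2 : degreeOf k (∑ i, (X i : MvPolynomial (Fin n) ℝ)) ≤ 1 := by
            refine (degreeOf_sum_le _ _ _).trans ?_
            refine Finset.sup_le fun j _ => ?_
            rw [degreeOf_X]; split <;> simp
          omega
      · refine (degreeOf_sum_le _ _ _).trans (Finset.sup_le fun p hp => ?_)
        have hne : p.1 ≠ p.2 := (Finset.mem_offDiag.mp hp).2.2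
        refine (degreeOf_mul_le _ _ _).trans ?_
        rw [degreeOf_X, degreeOf_X]
        rcases eq_or_ne k p.1 with h | h <;> rcases eq_or_ne k p.2 with h2 | h2 <;>
          simp_all
    have key : ∀ x : Fin n → Bool, evalB x P = 1/2 - ((wt x : ℝ) - c)^2 := by
      intro x
      set v : Fin n → ℝ := fun i => if x i then 1 else 0 with hv
      have hvsum : ∑ i, v i = (wt x : ℝ) := by
        simp [hv, wt]
      have hvsq : ∀ i, v i * v i = v i := by
        intro i; simp only [hv]; split <;> norm_num
      have hprod : ∑ p ∈ (Finset.univ ×ˢ Finset.univ), v p.1 * v p.2 = (wt x:ℝ)^2 := by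
        rw [Finset.sum_product]
        simp_rw [← Finset.mul_sum, hvsum, ← Finset.sum_mul, hvsum, sq]
      have hdiag : ((Finset.univ ×ˢ Finset.univ).filter
          (fun p : Fin n × Fin n => p.1 = p.2)) = Finset.univ.image (fun i => (i, i)) := by
        ext ⟨a, b⟩
        simp only [Finset.mem_filter, Finset.mem_product, Finset.mem_univ, true_and,
          Finset.mem_image]
        constructor
        · rintro rfl; exact ⟨a, rfl⟩
        · rintro ⟨i, hi⟩; cases hi; rfl
      have hdsum : ∑ p ∈ ((Finset.univ ×ˢ Finset.univ).filter
          (fun p : Fin n × Fin n => p.1 = p.2)), v p.1 * v p.2 = (wt x : ℝ) := by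
        rw [hdiag, Finset.sum_image (by intro a _ b _ h; exact (Prod.mk.injEq _ _ _ _).mp h |>.1)]
        simp_rw [hvsq, hvsum]
      have hoff : ∑ p ∈ Finset.univ.offDiag, v p.1 * v p.2 = (wt x:ℝ)^2 - wt x := by
        have hsplit := Finset.sum_filter_add_sum_filter_not
          (Finset.univ ×ˢ Finset.univ) (fun p : Fin n × Fin n => p.1 = p.2)
          (fun p => v p.1 * v p.2)
        have : Finset.univ.offDiag = (Finset.univ ×ˢ Finset.univ).filter
            (fun p : Fin n × Fin n => ¬ p.1 = p.2) := by ext p; simp [Finset.mem_offDiag]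
        rw [this]
        rw [hprod, hdsum] at hsplit
        linarith
      have heval : evalB x P = (1/2 - (c:ℝ)^2) + ((n:ℝ)-1) * (∑ i, v i)
          - ∑ p ∈ Finset.univ.offDiag, v p.1 * v p.2 := by
        simp [evalB, hP, map_sum, hv]
      rw [heval, hvsum, hoff, hnc]
      ring
    have sq1 : ∀ x : Fin n → Bool, wt x ≠ c → 1 ≤ ((wt x:ℝ) - c)^2 := by
      intro x h
      have h0 : ((wt x : ℤ) - c) ≠ 0 := by
        intro hh; apply h; omega
      have h1 : 1 ≤ ((wt x:ℤ) - c)^2 := by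
        rcases lt_or_gt_of_ne h0 with h' | h' <;> nlinarith
      have h2 : (1:ℝ) ≤ (((wt x:ℤ) - c : ℤ) : ℝ)^2 := by exact_mod_cast h1
      push_cast at h2
      linarith
    have hsign : ∀ x, evalB x P < 0 ↔ f x = true := by
      intro x
      rw [key]
      constructor
      · intro hx
        by_contra hfx
        have hfx' : f x = false := by
          cases hfxv : f x
          · rfl
          · exact absurd hfxv hfx
        have hwx := (hf x).mp hfx'
        rw [hwx] at hx
        simp at hx
        linarith
      · intro hx
        have hwx : wt x ≠ c := by
          intro hh
          have := (hf x).mpr hh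
          rw [hx] at this; exact Bool.noConfusion this
        have := sq1 x hwx
        linarith
    have hnz : ∀ x, evalB x P ≠ 0 := by
      intro x
      rw [key]
      rcases eq_or_ne (wt x) c with h | h
      · rw [h]; norm_num
      · have := sq1 x h; intro hh; linarith
    have hmem : P.totalDegree ∈ {d | ∃ p : MvPolynomial (Fin n) ℝ, Multilinear p ∧
        (∀ x, evalB x p ≠ 0) ∧ (∀ x, evalB x p < 0 ↔ f x = true) ∧ p.totalDegree = d} :=
      ⟨P, hmul, hnz, hsign, rfl⟩
    have hdeg : P.totalDegree ≤ 2 := by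
      refine (totalDegree_sub _ _).trans (max_le ?_ ?_)
      · refine (totalDegree_add _ _).trans (max_le ?_ ?_)
        · rw [totalDegree_C]; omega
        · refine (totalDegree_mul _ _).trans ?_
          have h1 : (C ((n:ℝ)-1) : MvPolynomial (Fin n) ℝ).totalDegree = 0 :=
            totalDegree_C _
          have h2 : (∑ i, (X i : MvPolynomial (Fin n) ℝ)).totalDegree ≤ 1 := by
            refine (totalDegree_finset_sum _ _).trans ?_
            exact Finset.sup_le fun j _ => le_of_eq (totalDegree_X j)
          omega
      · refine (totalDegree_finset_sum _ _).trans (Finset.sup_le fun p _ => ?_)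
        refine (totalDegree_mul _ _).trans ?_
        rw [totalDegree_X, totalDegree_X]
    exact le_trans (Nat.sInf_le hmem) hdeg
  · -- block sensitivity ≥ n
    rcases Nat.eq_zero_or_pos n with hn0 | hn0
    · subst hn0; simp
    set z : Fin n → Bool := fun i => decide ((i:ℕ) < c) with hz
    have hclt : c < n := by omega
    have hwz : wt z = c := by
      have : (Finset.univ.filter fun i : Fin n => z i = true) = Finset.Iio ⟨c, hclt⟩ := by
        ext j
        simp [hz, Fin.lt_def]
      rw [wt, this, Fin.card_Iio]
    have hfz : f z = false := (hf z).mpr hwz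
    have hsens : ∀ i : Fin n, wt (flipSet z {i}) ≠ c := by
      intro i
      have hflip : (Finset.univ.filter fun j => flipSet z {i} j = true)
          = if z i = true then (Finset.univ.filter fun j => z j = true).erase i
            else insert i (Finset.univ.filter fun j => z j = true) := by
        split
        · ext j
          by_cases hj : j = i <;> simp_all [flipSet]
        · ext j
          by_cases hj : j = i <;> simp_all [flipSet]
      rw [wt, hflip]
      by_cases hi : z i = true
      · rw [if_pos hi]
        have hiin : i ∈ (Finset.univ.filter fun j => z j = true) := by simp [hi]
        rw [Finset.card_erase_of_mem hiin]
        have hc1 : 1 ≤ c := by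
          have := (by simpa [hz] using hi : (i:ℕ) < c)
          omega
        have : (Finset.univ.filter fun j : Fin n => z j = true).card = c := hwz
        omega
      · rw [if_neg hi]
        have hiout : i ∉ (Finset.univ.filter fun j => z j = true) := by simp [hi]
        rw [Finset.card_insert_of_notMem hiout]
        have : (Finset.univ.filter fun j : Fin n => z j = true).card = c := hwz
        omega
    have hmem : n ∈ {k | ∃ Bs : Fin k → Finset (Fin n),
        (∀ i, f (flipSet z (Bs i)) ≠ f z) ∧ (∀ i j, i ≠ j → Disjoint (Bs i) (Bs j))} := by
      refine ⟨fun i => {i}, fun i h => ?_, fun i j hij => ?_⟩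
      · rw [hfz] at h
        exact hsens i ((hf _).mp h)
      · exact Finset.disjoint_singleton.mpr hij
    have hbdd : ∀ k ∈ {k | ∃ Bs : Fin k → Finset (Fin n),
        (∀ i, f (flipSet z (Bs i)) ≠ f z) ∧ (∀ i j, i ≠ j → Disjoint (Bs i) (Bs j))},
        k ≤ n := by
      rintro k ⟨Bs, hne, hdisj⟩
      have hnonempty : ∀ i, (Bs i).Nonempty := by
        intro i
        rcases (Bs i).eq_empty_or_nonempty with h | h
        · exfalso
          apply hne i
          congr 1
          funext j
          simp [flipSet, h]
        · exact h
      choose g hg using hnonempty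
      have hinj : Function.Injective g := by
        intro i j hij
        by_contra hne2
        exact (Finset.disjoint_left.mp (hdisj i j hne2) (hg i)) (hij ▸ hg j)
      simpa using Fintype.card_le_of_injective g hinj
    exact le_csSup ⟨n, hbdd⟩ hmem
end
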